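/- Fix n ≥ 2 and for natural numbers a ≤ F_{n-1}, b ≤ F_n (not both maximal), let x(a,b) denote the unique positive root of x^n − (F_n − b)·x − (F_{n-1} − a). Then x(a,b) is strictly decreasing in a (for a < F_{n-1} with fixed b) and strictly decreasing in b (for b < F_n with fixed a), whenever the root is > 1. -/

import Mathlib

lemma key_pos (n : ℕ) (hn : 2 ≤ n) (c d x t : ℝ) (hc : 0 ≤ c) (hd : 0 ≤ d)
    (hx : 0 < x) (hroot : x ^ n - c * x - d = 0) (ht : x < t) :
    0 < t ^ n - c * t - d := by
  have hxpow : c ≤ x ^ (n - 1) := by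
    have h1 : x * x ^ (n - 1) = x ^ n := by
      rw [← pow_succ']
      congr 1
      omega
    have h2 : c * x ≤ x * x ^ (n - 1) := by nlinarith
    have := (mul_le_mul_iff_right₀ hx).mp (by linarith [mul_comm c x] : x * c ≤ x * x ^ (n - 1))
    exact this
  have hxp : 0 < x ^ (n - 1) := pow_pos hx _
  have hsum := geom_sum₂_mul (R := ℝ) t x n
  -- sum bound
  have hbound : (n : ℝ) * x ^ (n - 1) ≤ ∑ i ∈ Finset.range n, t ^ i * x ^ (n - 1 - i) := by
    have : ∀ i ∈ Finset.range n, x ^ (n - 1) ≤ t ^ i * x ^ (n - 1 - i) := by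
      intro i hi
      simp only [Finset.mem_range] at hi
      have h1 : x ^ i ≤ t ^ i := pow_le_pow_left₀ hx.le ht.le i
      calc x ^ (n - 1) = x ^ i * x ^ (n - 1 - i) := by
            rw [← pow_add]; congr 1; omega
        _ ≤ t ^ i * x ^ (n - 1 - i) := by
            have := pow_pos hx (n - 1 - i)
            nlinarith
    calc (n : ℝ) * x ^ (n - 1) = ∑ _i ∈ Finset.range n, x ^ (n - 1) := by
          simp [Finset.sum_const, mul_comm]
      _ ≤ _ := Finset.sum_le_sum this
  have h2n : (2 : ℝ) ≤ (n : ℝ) := by exact_mod_cast hn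
  have hstep : (x ^ (n - 1)) * (t - x) ≤ t ^ n - x ^ n - c * (t - x) := by
    have htx : 0 < t - x := by linarith
    have h1 := mul_le_mul_of_nonneg_right hbound htx.le
    rw [hsum] at h1
    have h2 : c * (t - x) ≤ x ^ (n - 1) * (t - x) :=
      mul_le_mul_of_nonneg_right hxpow htx.le
    have h3 : (2:ℝ) * (x ^ (n - 1) * (t - x)) ≤ (n:ℝ) * x ^ (n - 1) * (t - x) := by
      have := mul_pos hxp htx
      nlinarith
    nlinarith
  nlinarith [mul_pos hxp (by linarith : (0:ℝ) < t - x)]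

lemma lt_of_neg (n : ℕ) (hn : 2 ≤ n) (c d x y : ℝ) (hc : 0 ≤ c) (hd : 0 ≤ d)
    (hx : 0 < x) (hroot : x ^ n - c * x - d = 0)
    (hy : y ^ n - c * y - d < 0) : y < x := by
  by_contra h
  push_neg at h
  rcases eq_or_lt_of_le h with rfl | hlt
  · linarith
  · linarith [key_pos n hn c d x y hc hd hx hroot hlt]

theorem root_strict_decreasing (n : ℕ) (hn : 2 ≤ n) :
    (∀ a b : ℕ, a + 1 ≤ Nat.fib (n - 1) → b ≤ Nat.fib n →
      ∀ x y : ℝ, 0 < x → 1 < x →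
        x ^ n - ((Nat.fib n : ℝ) - b) * x - ((Nat.fib (n - 1) : ℝ) - a) = 0 →
        0 < y →
        y ^ n - ((Nat.fib n : ℝ) - b) * y - ((Nat.fib (n - 1) : ℝ) - (a + 1)) = 0 →
        y < x) ∧
    (∀ a b : ℕ, a ≤ Nat.fib (n - 1) → b + 1 ≤ Nat.fib n →
      ∀ x y : ℝ, 0 < x → 1 < x →
        x ^ n - ((Nat.fib n : ℝ) - b) * x - ((Nat.fib (n - 1) : ℝ) - a) = 0 →
        0 < y →
        y ^ n - ((Nat.fib n : ℝ) - (b + 1)) * y - ((Nat.fib (n - 1) : ℝ) - a) = 0 →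
        y < x) := by
  have hF1 : (0:ℝ) ≤ (Nat.fib (n-1) : ℝ) := by positivity
  constructor
  · intro a b ha hb x y hx hx1 hxr hy hyr
    have hc : (0:ℝ) ≤ (Nat.fib n : ℝ) - b := by
      have : (b:ℝ) ≤ (Nat.fib n : ℝ) := by exact_mod_cast hb
      linarith
    have hd : (0:ℝ) ≤ (Nat.fib (n-1) : ℝ) - a := by
      have : (a:ℝ) + 1 ≤ (Nat.fib (n-1) : ℝ) := by exact_mod_cast ha
      linarith
    refine lt_of_neg n hn ((Nat.fib n : ℝ) - b) ((Nat.fib (n-1) : ℝ) - a) x y hc hd hx hxr ?_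
    linarith
  · intro a b ha hb x y hx hx1 hxr hy hyr
    have hc : (0:ℝ) ≤ (Nat.fib n : ℝ) - b := by
      have : (b:ℝ) + 1 ≤ (Nat.fib n : ℝ) := by exact_mod_cast hb
      linarith
    have hd : (0:ℝ) ≤ (Nat.fib (n-1) : ℝ) - a := by
      have : (a:ℝ) ≤ (Nat.fib (n-1) : ℝ) := by exact_mod_cast ha
      linarith
    refine lt_of_neg n hn ((Nat.fib n : ℝ) - b) ((Nat.fib (n-1) : ℝ) - a) x y hc hd hx hxr ?_
    nlinarith
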